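/- Let 𝔼 be an exceptional collection in a saturated triangulated category D with Serre functor S_D. Then on the subcategory ^⊥𝔼 one has S_{𝔼^⊥} ∘ L_𝔼 = S_D|_{^⊥𝔼} = L_𝔼 ∘ S_{^⊥𝔼}, where S_{𝔼^⊥} and S_{^⊥𝔼} are the Serre functors of the admissible subcategories 𝔼^⊥ and ^⊥𝔼. -/

import Mathlib

open CategoryTheory Limits Pretriangulated

universe v u

variable (C : Type u) [Category.{v} C] [Preadditive C] [HasZeroObject C]
  [HasShift C ℤ] [∀ n : ℤ, (CategoryTheory.shiftFunctor C n).Additive] [Pretriangulated C]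
  [CategoryTheory.Linear ℂ C]

/-- All graded morphisms from `X` to `Y` vanish. -/
def NoHoms (X Y : C) : Prop := ∀ n : ℤ, ∀ f : X ⟶ Y⟦n⟧, f = 0

/-- The category `C` is of finite type: total graded Hom spaces are finite dimensional. -/
def FiniteType : Prop :=
  ∀ X Y : C, (∀ n : ℤ, FiniteDimensional ℂ (X ⟶ Y⟦n⟧)) ∧
    {n : ℤ | ∃ f : X ⟶ Y⟦n⟧, f ≠ 0}.Finite

/-- An exceptional object: `Hom^•(E,E) = ℂ`, concentrated in degree `0`. -/
def IsExceptional (E : C) : Prop :=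
  (∀ n : ℤ, n ≠ 0 → ∀ f : E ⟶ E⟦n⟧, f = 0) ∧ Module.finrank ℂ (E ⟶ E) = 1

/-- Membership in the smallest strictly full triangulated subcategory containing `S`. -/
inductive genTriang (S : Set C) : C → Prop
  | of (X : C) (hX : X ∈ S) : genTriang S X
  | isZero (X : C) (hX : IsZero X) : genTriang S X
  | iso {X Y : C} (e : X ≅ Y) (hX : genTriang S X) : genTriang S Y
  | shift (X : C) (n : ℤ) (hX : genTriang S X) : genTriang S (X⟦n⟧)
  | ext₂ (T : Triangle C) (hT : T ∈ distTriang C) (h₁ : genTriang S T.obj₁)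
      (h₃ : genTriang S T.obj₃) : genTriang S T.obj₂

/-- The left orthogonal `^⊥S`. -/
def leftOrth (S : Set C) : Set C := {X | ∀ Y ∈ S, NoHoms C X Y}

/-- The right orthogonal `S^⊥`. -/
def rightOrth (S : Set C) : Set C := {X | ∀ Y ∈ S, NoHoms C Y X}

/-- `Y` is the left mutation of `X` through (the subcategory generated by) `S`. -/
def IsLeftMutation (S : Set C) (X Y : C) : Prop :=
  X ∈ leftOrth C S ∧ Y ∈ rightOrth C S ∧
    ∃ (A : C) (f : A ⟶ X) (g : X ⟶ Y) (h : Y ⟶ A⟦(1:ℤ)⟧),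
      genTriang C S A ∧ Triangle.mk f g h ∈ distTriang C

/-- `X` is the right mutation of `Y` through (the subcategory generated by) `S`. -/
def IsRightMutation (S : Set C) (X Y : C) : Prop :=
  X ∈ leftOrth C S ∧ Y ∈ rightOrth C S ∧
    ∃ (A : C) (f : X ⟶ Y) (g : Y ⟶ A) (h : A ⟶ X⟦(1:ℤ)⟧),
      genTriang C S A ∧ Triangle.mk f g h ∈ distTriang C

/-- `IterLeftMut l X Y` : `Y ≅ L_{E₁} ⋯ L_{E_k} (X)` where `l = [E₁, …, E_k]`. -/
def IterLeftMut : List C → C → C → Prop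
  | [], X, Y => Nonempty (X ≅ Y)
  | (E :: t), X, Y => ∃ Z, IterLeftMut t X Z ∧ IsLeftMutation C {E} Z Y

/-- `IterRightMut l Y X` : `X ≅ R_{E_k} ⋯ R_{E₁} (Y)` where `l = [E₁, …, E_k]`. -/
def IterRightMut : List C → C → C → Prop
  | [], Y, X => Nonempty (Y ≅ X)
  | (E :: t), Y, X => ∃ Z, IsRightMutation C {E} Z Y ∧ IterRightMut t Z X

/-- `E 0, …, E (n-1)` is an exceptional collection. -/
def ExcCollection (n : ℕ) (E : ℕ → C) : Prop :=
  (∀ i < n, IsExceptional C (E i)) ∧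
    ∀ i j, i < j → j < n → NoHoms C (E j) (E i)

/-- The set of objects of the collection `E 0, …, E (n-1)`. -/
def collSet (n : ℕ) (E : ℕ → C) : Set C := {X | ∃ i < n, X = E i}


/-- Serre-functor data on the (full triangulated) subcategory of `C` whose objects
form the set `P`: a functor preserving `P`, with a perfect, natural pairing
`Hom(X,Y) ⊗ Hom(Y, S X) → ℂ` for `X, Y ∈ P`, giving `Hom(X,Y) ≅ Hom(Y, S X)*`. -/
structure SerreDataOn (P : Set C) where
  S : C ⥤ C
  maps_mem : ∀ X ∈ P, S.obj X ∈ P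
  pairing : ∀ X Y : C, (X ⟶ Y) →ₗ[ℂ] ((Y ⟶ S.obj X) →ₗ[ℂ] ℂ)
  bij : ∀ X ∈ P, ∀ Y ∈ P,
    Function.Bijective fun (u : X ⟶ Y) => pairing X Y u
  nat_left : ∀ {A A' B : C} (f : A' ⟶ A) (u : A ⟶ B) (v : B ⟶ S.obj A'),
    pairing A' B (f ≫ u) v = pairing A B u (v ≫ S.map f)
  nat_right : ∀ {A B B' : C} (u : A ⟶ B) (g : B ⟶ B') (v : B' ⟶ S.obj A),
    pairing A B' (u ≫ g) v = pairing A B u (g ≫ v)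


section Infrastructure
set_option linter.unusedSectionVars false

variable {C}

open CategoryTheory.Pretriangulated

/-! ### Shift and vanishing lemmas -/

lemma hom_zero_of_shift_src' {X Y : C} {n m k : ℤ} (hk : m + -n = k)
    (h : ∀ f : X ⟶ Y⟦k⟧, f = 0) (g : X⟦n⟧ ⟶ Y⟦m⟧) : g = 0 := by
  apply (shiftFunctor C (-n)).map_injective
  have hn : n + -n = 0 := by omega
  set e1 := (shiftFunctorCompIsoId C n (-n) hn).app X with he1
  set e2 := (shiftFunctorAdd' C m (-n) k hk).app Y with he2
  have hu : (shiftFunctor C (-n)).map g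
      = e1.hom ≫ (e1.inv ≫ (shiftFunctor C (-n)).map g ≫ e2.inv) ≫ e2.hom := by
    simp
  rw [hu, h (e1.inv ≫ (shiftFunctor C (-n)).map g ≫ e2.inv)]
  simp

lemma hom_zero_of_shift_tgt' {X Y : C} {n m k : ℤ} (hk : n + m = k)
    (h : ∀ f : X ⟶ Y⟦k⟧, f = 0) (g : X ⟶ Y⟦n⟧⟦m⟧) : g = 0 := by
  set e := (shiftFunctorAdd' C n m k hk).app Y with he
  have : g = (g ≫ e.inv) ≫ e.hom := by simp
  rw [this, h (g ≫ e.inv)]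
  simp

lemma hom_zero_of_shift_neg {X Y : C} (m : ℤ)
    (h : ∀ f : X⟦-m⟧ ⟶ Y, f = 0) (g : X ⟶ Y⟦m⟧) : g = 0 := by
  apply (shiftFunctor C (-m)).map_injective
  have hm : m + -m = 0 := by omega
  set e := (shiftFunctorCompIsoId C m (-m) hm).app Y with he
  have : (shiftFunctor C (-m)).map g
      = ((shiftFunctor C (-m)).map g ≫ e.hom) ≫ e.inv := by simp
  rw [this, h ((shiftFunctor C (-m)).map g ≫ e.hom)]
  simp

namespace NoHoms

lemma shift_left {X Y : C} (h : NoHoms C X Y) (n : ℤ) : NoHoms C (X⟦n⟧) Y :=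
  fun m f => hom_zero_of_shift_src' rfl (h (m + -n)) f

lemma shift_right {X Y : C} (h : NoHoms C X Y) (n : ℤ) : NoHoms C X (Y⟦n⟧) :=
  fun m f => hom_zero_of_shift_tgt' rfl (h (n + m)) f

lemma iso_src {X X' Y : C} (e : X ≅ X') (h : NoHoms C X Y) : NoHoms C X' Y := by
  intro m f
  have : e.hom ≫ f = 0 := h m _
  rw [← Iso.inv_hom_id_assoc e f, this, comp_zero]

lemma iso_tgt {X Y Y' : C} (e : Y ≅ Y') (h : NoHoms C X Y) : NoHoms C X Y' := by
  intro m f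
  have h0 : f ≫ (shiftFunctor C m).map e.inv = 0 := h m _
  have : f = (f ≫ (shiftFunctor C m).map e.inv) ≫ (shiftFunctor C m).map e.hom := by
    rw [Category.assoc, ← (shiftFunctor C m).map_comp, Iso.inv_hom_id, (shiftFunctor C m).map_id, Category.comp_id]
  rw [this, h0, zero_comp]

lemma zero_src {X Y : C} (hX : IsZero X) : NoHoms C X Y :=
  fun _ f => hX.eq_of_src f 0

lemma zero_tgt {X Y : C} (hY : IsZero Y) : NoHoms C X Y := by
  intro m f
  have h1 : (𝟙 Y : Y ⟶ Y) = 0 := hY.eq_of_src _ _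
  have : f = f ≫ (shiftFunctor C m).map (𝟙 Y) := by simp
  rw [this, h1, Functor.map_zero, comp_zero]

end NoHoms

/-! ### Orthogonality propagation along `genTriang` -/

lemma genTriang_noHoms_src {S : Set C} {F A : C} (hS : ∀ s ∈ S, NoHoms C s F)
    (hA : genTriang C S A) : NoHoms C A F := by
  induction hA with
  | of X hX => exact hS X hX
  | isZero X hX => exact NoHoms.zero_src hX
  | iso e _ ih => exact NoHoms.iso_src e ih
  | shift X n _ ih => exact ih.shift_left n
  | ext₂ T hT h₁ h₃ ih₁ ih₃ =>
    intro m f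
    obtain ⟨g, hg⟩ := Triangle.yoneda_exact₂ T hT f (ih₁ m (T.mor₁ ≫ f))
    rw [hg, ih₃ m g, comp_zero]

lemma genTriang_noHoms_tgt {S : Set C} {F A : C} (hS : ∀ s ∈ S, NoHoms C F s)
    (hA : genTriang C S A) : NoHoms C F A := by
  induction hA with
  | of X hX => exact hS X hX
  | isZero X hX => exact NoHoms.zero_tgt hX
  | iso e _ ih => exact NoHoms.iso_tgt e ih
  | shift X n _ ih => exact ih.shift_right n
  | ext₂ T hT h₁ h₃ ih₁ ih₃ =>
    intro m f
    have hTm := Pretriangulated.Triangle.shift_distinguished T hT m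
    rw [Triangle.shiftFunctor_eq] at hTm
    obtain ⟨g, hg⟩ := Triangle.coyoneda_exact₂ _ hTm
      (f : F ⟶ ((Triangle.shiftFunctor C m).obj T).obj₂)
      (ih₃ m (f ≫ ((Triangle.shiftFunctor C m).obj T).mor₂))
    have : g = 0 := ih₁ m g
    rw [hg, this]; exact zero_comp

end Infrastructure


section Infra2
set_option linter.unusedSectionVars false
set_option maxHeartbeats 800000
variable {C}
open ZeroObject

/-! ### Linear algebra helpers -/

lemma flip_bijective {V W : Type v} [AddCommGroup V] [Module ℂ V] [AddCommGroup W] [Module ℂ W]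
    [FiniteDimensional ℂ V] [FiniteDimensional ℂ W]
    (B : V →ₗ[ℂ] W →ₗ[ℂ] ℂ) (hB : Function.Bijective B) :
    Function.Bijective B.flip := by
  have hinj : Function.Injective B.flip := by
    intro w w' hww
    have hφ : ∀ φ : Module.Dual ℂ W, φ (w - w') = 0 := by
      intro φ
      obtain ⟨v, rfl⟩ := hB.2 φ
      have := DFunLike.congr_fun hww v
      simp only [LinearMap.flip_apply] at this
      simp [this]
    have := (Module.forall_dual_apply_eq_zero_iff ℂ (w - w')).1 hφ
    exact sub_eq_zero.1 this
  constructor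
  · exact hinj
  · have h1 : Module.finrank ℂ V = Module.finrank ℂ (Module.Dual ℂ W) :=
      (LinearEquiv.ofBijective B hB).finrank_eq
    have h2 : Module.finrank ℂ (LinearMap.range B.flip) = Module.finrank ℂ (Module.Dual ℂ V) := by
      rw [LinearMap.finrank_range_of_inj hinj, Subspace.dual_finrank_eq]
      rw [Subspace.dual_finrank_eq] at h1
      omega
    have := Submodule.eq_top_of_finrank_eq h2
    exact LinearMap.range_eq_top.1 this

lemma homFinite (hft : FiniteType C) (X Y : C) : FiniteDimensional ℂ (X ⟶ Y) := by
  have h0 := (hft X Y).1 0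
  set e := (shiftFunctorZero C ℤ).app Y with he
  refine FiniteDimensional.of_injective (Linear.rightComp (R := ℂ) X e.inv) ?_
  intro f g hfg
  simp only [Linear.rightComp_apply] at hfg
  have := congrArg (fun t => t ≫ e.hom) hfg
  simpa using this

/-! ### Endomorphisms of shifts of an exceptional object are scalars -/

lemma exceptional_id_spans {E : C} (hE : IsExceptional C E) :
    ∀ f : E ⟶ E, ∃ c : ℂ, c • 𝟙 E = f := by
  have hid : (𝟙 E : E ⟶ E) ≠ 0 := by
    intro h0
    have hz : ∀ f : E ⟶ E, f = 0 := fun f => by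
      rw [← Category.comp_id f, h0, Limits.comp_zero]
    have : Subsingleton (E ⟶ E) := ⟨fun a b => by rw [hz a, hz b]⟩
    have := Module.finrank_zero_of_subsingleton (R := ℂ) (M := (E ⟶ E))
    rw [hE.2] at this
    omega
  exact (finrank_eq_one_iff_of_nonzero' (𝟙 E) hid).mp hE.2

lemma exceptional_endo_shift_scalar (hft : FiniteType C) {E : C} (hE : IsExceptional C E)
    (m : ℤ) (h : E⟦m⟧ ⟶ E⟦m⟧) : ∃ c : ℂ, h = c • 𝟙 (E⟦m⟧) := by
  have hEnd := exceptional_id_spans hE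
  have hid : (𝟙 E : E ⟶ E) ≠ 0 := by
    intro h0
    have hz : ∀ f : E ⟶ E, f = 0 := fun f => by
      rw [← Category.comp_id f, h0, Limits.comp_zero]
    have : Subsingleton (E ⟶ E) := ⟨fun a b => by rw [hz a, hz b]⟩
    have := Module.finrank_zero_of_subsingleton (R := ℂ) (M := (E ⟶ E))
    rw [hE.2] at this
    omega
  have hFD : FiniteDimensional ℂ (E⟦m⟧ ⟶ E⟦m⟧) := homFinite hft _ _
  have hNontriv : Nontrivial (E⟦m⟧ ⟶ E⟦m⟧) := by
    refine nontrivial_of_ne (𝟙 _) 0 ?_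
    intro h0
    apply hid
    apply (shiftFunctor C m).map_injective
    rw [CategoryTheory.Functor.map_id, Functor.map_zero, h0]
  set L : Module.End ℂ (E⟦m⟧ ⟶ E⟦m⟧) := Linear.rightComp (R := ℂ) _ h with hL
  obtain ⟨c, hc⟩ := Module.End.exists_eigenvalue L
  obtain ⟨v, hv⟩ := hc.exists_hasEigenvector
  have hveq : v ≫ h = c • v := hv.apply_eq_smul
  obtain ⟨v₀, rfl⟩ := (shiftFunctor C m).map_surjective v
  have hv₀ : v₀ ≠ 0 := by
    intro h0
    exact hv.2 (by rw [h0, Functor.map_zero])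
  obtain ⟨c₀, hc₀⟩ := hEnd v₀
  have hc₀ne : c₀ ≠ 0 := by
    rintro rfl
    exact hv₀ (by rw [← hc₀, zero_smul])
  set w₀ : E ⟶ E := c₀⁻¹ • 𝟙 E with hw₀
  have hw : w₀ ≫ v₀ = 𝟙 E := by
    rw [hw₀, ← hc₀, Linear.smul_comp, Linear.comp_smul, smul_smul, Category.id_comp,
      inv_mul_cancel₀ hc₀ne, one_smul]
  refine ⟨c, ?_⟩
  calc h = 𝟙 _ ≫ h := by rw [Category.id_comp]
    _ = (shiftFunctor C m).map (w₀ ≫ v₀) ≫ h := by rw [hw, CategoryTheory.Functor.map_id]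
    _ = (shiftFunctor C m).map w₀ ≫ ((shiftFunctor C m).map v₀ ≫ h) := by
        rw [Functor.map_comp, Category.assoc]
    _ = (shiftFunctor C m).map w₀ ≫ (c • (shiftFunctor C m).map v₀) := by rw [hveq]
    _ = c • ((shiftFunctor C m).map (w₀ ≫ v₀)) := by
        rw [Linear.comp_smul, Functor.map_comp]
    _ = c • 𝟙 _ := by rw [hw, CategoryTheory.Functor.map_id]

/-! ### Finite直 sums of copies -/

noncomputable def nCopies (X : C) : ℕ → C
  | 0 => 0
  | (d+1) => biprod X (nCopies X d)

noncomputable def copiesLift {A X : C} : {d : ℕ} → (Fin d → (A ⟶ X)) → (A ⟶ nCopies X d)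
  | 0, _ => 0
  | (_+1), v => biprod.lift (v 0) (copiesLift (fun i => v i.succ))

noncomputable def copiesDesc {X F : C} : {d : ℕ} → (Fin d → (X ⟶ F)) → (nCopies X d ⟶ F)
  | 0, _ => 0
  | (_+1), w => biprod.desc (w 0) (copiesDesc (fun i => w i.succ))

lemma copiesLift_comp_desc {A X F : C} : ∀ {d} (v : Fin d → (A ⟶ X)) (w : Fin d → (X ⟶ F)),
    copiesLift v ≫ copiesDesc w = ∑ i, v i ≫ w i
  | 0, v, w => by simp [copiesLift, copiesDesc]
  | (d+1), v, w => by
    rw [copiesLift, copiesDesc]; erw [biprod.lift_desc]; rw [copiesLift_comp_desc, Fin.sum_univ_succ]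

lemma copies_hom_decomp {X F : C} : ∀ {d} (g : nCopies X d ⟶ F),
    ∃ w : Fin d → (X ⟶ F), g = copiesDesc w
  | 0, g => ⟨0, (isZero_zero C).eq_of_src g _⟩
  | (d+1), g => by
    obtain ⟨w, hw⟩ := copies_hom_decomp (biprod.inr ≫ g)
    refine ⟨Fin.cons (biprod.inl ≫ g) w, ?_⟩
    have hfun : (fun i : Fin d => Fin.cons (α := fun _ => (X ⟶ F)) (biprod.inl ≫ g) w i.succ)
        = w := funext fun i => Fin.cons_succ _ _ _
    apply biprod.hom_ext'
    · simp [copiesDesc]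
    · rw [show (g : nCopies X (d+1) ⟶ F) = biprod.desc (biprod.inl ≫ g) (biprod.inr ≫ g) from
        by apply biprod.hom_ext' <;> simp]
      simp only [copiesDesc, hfun]
      simp [hw]

lemma copies_vanish {X F : C} (h : ∀ g : X ⟶ F, g = 0) :
    ∀ {d} (g : nCopies X d ⟶ F), g = 0
  | 0, g => (isZero_zero C).eq_of_src g _
  | (d+1), g => by
    apply biprod.hom_ext'
    · rw [h (biprod.inl ≫ g)]; exact comp_zero.symm
    · rw [copies_vanish h (biprod.inr ≫ g)]; exact comp_zero.symm

lemma copiesDesc_vanish {X F : C} {d} (w : Fin d → (X ⟶ F)) (h : ∀ i, w i = 0) :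
    copiesDesc w = 0 := by
  induction d with
  | zero => exact (isZero_zero C).eq_of_src _ _
  | succ d ih =>
    rw [copiesDesc, h 0, ih _ (fun i => h i.succ)]
    apply biprod.hom_ext' <;> simp <;> exact comp_zero.symm

lemma genTriang_nCopies {S : Set C} {X : C} (hX : genTriang C S X) :
    ∀ d, genTriang C S (nCopies X d)
  | 0 => genTriang.isZero _ (isZero_zero C)
  | (d+1) => genTriang.ext₂ (binaryBiproductTriangle X (nCopies X d))
      (binaryBiproductTriangle_distinguished X (nCopies X d)) hX (genTriang_nCopies hX d)

end Infra2


section Infra3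
set_option linter.unusedSectionVars false
set_option maxHeartbeats 1600000
variable {C}
open ZeroObject

/-! ### Outer biproduct over a list of degrees -/

noncomputable def outObj (Bf : ℤ → C) : List ℤ → C
  | [] => 0
  | m::t => biprod (Bf m) (outObj Bf t)

noncomputable def outLift {A : C} (Bf : ℤ → C) (cf : ∀ m, A ⟶ Bf m) :
    (ms : List ℤ) → (A ⟶ outObj Bf ms)
  | [] => 0
  | m::t => biprod.lift (cf m) (outLift Bf cf t)

lemma outObj_genTriang {S : Set C} {Bf : ℤ → C} (h : ∀ m, genTriang C S (Bf m)) :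
    ∀ ms : List ℤ, genTriang C S (outObj Bf ms)
  | [] => genTriang.isZero _ (isZero_zero C)
  | m::t => genTriang.ext₂ (binaryBiproductTriangle (Bf m) (outObj Bf t))
      (binaryBiproductTriangle_distinguished _ _) (h m) (outObj_genTriang h t)

lemma out_vanish {Bf : ℤ → C} {F : C} :
    ∀ {ms : List ℤ}, (∀ m ∈ ms, ∀ g : Bf m ⟶ F, g = 0) → ∀ g : outObj Bf ms ⟶ F, g = 0
  | [], _, g => (isZero_zero C).eq_of_src g _
  | m::t, h, g => by
    apply biprod.hom_ext'
    · rw [h m (by simp) (biprod.inl ≫ g)]; exact comp_zero.symm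
    · rw [out_vanish (fun m' hm' => h m' (by simp [hm'])) (biprod.inr ≫ g)]; exact comp_zero.symm

lemma out_surj {A : C} {Bf : ℤ → C} {cf : ∀ m, A ⟶ Bf m} {F : C} {m' : ℤ}
    (hsur : ∀ f : A ⟶ F, ∃ g, cf m' ≫ g = f) :
    ∀ {ms : List ℤ}, m' ∈ ms → ∀ f : A ⟶ F,
      ∃ g : outObj Bf ms ⟶ F, outLift Bf cf ms ≫ g = f := by
  intro ms
  induction ms with
  | nil => intro h; exact absurd h List.not_mem_nil
  | cons m t ih =>
    intro hmem f
    by_cases hm : m = m'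
    · subst hm
      obtain ⟨g₀, hg₀⟩ := hsur f
      refine ⟨biprod.desc g₀ 0, ?_⟩
      rw [outLift]; erw [biprod.lift_desc]; rw [hg₀]
      simp
    · have hmem' : m' ∈ t := by
        rcases List.mem_cons.1 hmem with h | h
        · exact absurd h.symm hm
        · exact h
      obtain ⟨g', hg'⟩ := ih hmem' f
      refine ⟨biprod.desc 0 g', ?_⟩
      rw [outLift]; erw [biprod.lift_desc]; rw [hg']
      simp

lemma out_inj {A : C} {Bf : ℤ → C} {cf : ∀ m, A ⟶ Bf m} {F : C} {m' : ℤ}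
    (hbinj : ∀ g : Bf m' ⟶ F, cf m' ≫ g = 0 → g = 0)
    (hmis : ∀ m, m ≠ m' → ∀ g : Bf m ⟶ F, g = 0) :
    ∀ {ms : List ℤ}, ms.Nodup →
      ∀ g : outObj Bf ms ⟶ F, outLift Bf cf ms ≫ g = 0 → g = 0 := by
  intro ms
  induction ms with
  | nil => intro _ g _; exact (isZero_zero C).eq_of_src g _
  | cons m t ih =>
    intro hnd g hg
    have hdec : g = biprod.desc (biprod.inl ≫ g) (biprod.inr ≫ g) := by
      apply biprod.hom_ext' <;> simp
    rw [hdec, outLift] at hg; erw [biprod.lift_desc] at hg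
    by_cases hm : m = m'
    · subst hm
      have ht : ∀ m'' ∈ t, m'' ≠ m := fun m'' hm'' heq => by
        rw [heq] at hm''
        exact (List.nodup_cons.1 hnd).1 hm''
      have h₂ : (biprod.inr ≫ g) = 0 :=
        out_vanish (fun m'' hm'' => hmis m'' (ht m'' hm'')) _
      rw [h₂, Limits.comp_zero, add_zero] at hg
      have h₁ := hbinj _ hg
      rw [hdec, h₁, h₂]
      apply biprod.hom_ext' <;> simp <;> exact comp_zero.symm
    · have h₁ : (biprod.inl ≫ g) = 0 := hmis m hm _
      rw [h₁, Limits.comp_zero, zero_add] at hg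
      have h₂ := ih (List.nodup_cons.1 hnd).2 _ hg
      rw [hdec, h₁, h₂]
      apply biprod.hom_ext' <;> simp <;> exact comp_zero.symm

/-! ### Phantom-composition lemma -/

lemma phantom_comp_shift_neg {P Q Y : C} (δ : P ⟶ Q)
    (hδ : ∀ k : ℤ, ∀ w : Q ⟶ Y⟦k⟧, δ ≫ w = 0) (m : ℤ) (z : Q⟦(-1:ℤ)⟧ ⟶ Y⟦m⟧) :
    (shiftFunctor C (-1:ℤ)).map δ ≫ z = 0 := by
  apply (shiftFunctor C (1:ℤ)).map_injective
  rw [Functor.map_zero, Functor.map_comp]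
  have hne : (-1 : ℤ) + 1 = 0 := by omega
  set e := shiftFunctorCompIsoId C (-1:ℤ) (1:ℤ) hne with he
  have hnat : (shiftFunctor C (1:ℤ)).map ((shiftFunctor C (-1:ℤ)).map δ)
      = e.hom.app P ≫ δ ≫ e.inv.app Q := by
    have h1 := e.hom.naturality δ
    simp only [Functor.comp_map, Functor.id_map] at h1
    rw [← Category.assoc, ← h1]
    simp
  set w : Q ⟶ Y⟦m+1⟧ := e.inv.app Q ≫ (shiftFunctor C (1:ℤ)).map z
      ≫ (shiftFunctorAdd' C m (1:ℤ) (m+1) rfl).inv.app Y with hw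
  have hzero : δ ≫ w = 0 := hδ (m+1) w
  have hzz : e.inv.app Q ≫ (shiftFunctor C (1:ℤ)).map z
      = w ≫ (shiftFunctorAdd' C m (1:ℤ) (m+1) rfl).hom.app Y := by
    rw [hw]
    simp
  calc (shiftFunctor C (1:ℤ)).map ((shiftFunctor C (-1:ℤ)).map δ) ≫ (shiftFunctor C (1:ℤ)).map z
      = (e.hom.app P ≫ δ ≫ e.inv.app Q) ≫ (shiftFunctor C (1:ℤ)).map z := by rw [hnat]
    _ = e.hom.app P ≫ δ ≫ (e.inv.app Q ≫ (shiftFunctor C (1:ℤ)).map z) := by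
        simp only [Category.assoc]
    _ = e.hom.app P ≫ δ ≫ w ≫ (shiftFunctorAdd' C m (1:ℤ) (m+1) rfl).hom.app Y := by rw [hzz]
    _ = e.hom.app P ≫ (δ ≫ w) ≫ (shiftFunctorAdd' C m (1:ℤ) (m+1) rfl).hom.app Y := by
        simp only [Category.assoc]
    _ = 0 := by rw [hzero]; simp

/-! ### Existence of the approximation triangle (right mutation) -/

lemma exists_right_approx (hft : FiniteType C) {E : C} (hE : IsExceptional C E) (A : C) :
    ∃ (B : C) (ρ : B ⟶ A) (A' : C) (c : A ⟶ A') (δ : A' ⟶ B⟦(1:ℤ)⟧),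
      genTriang C {E} A' ∧ (Triangle.mk ρ c δ ∈ distTriang C) ∧
      (∀ m : ℤ, ∀ f : B ⟶ E⟦m⟧, f = 0) := by
  classical
  have hFD : ∀ m : ℤ, FiniteDimensional ℂ (A ⟶ E⟦m⟧) := (hft A E).1
  set d : ℤ → ℕ := fun m => Module.finrank ℂ (A ⟶ E⟦m⟧) with hd
  set bas : ∀ m : ℤ, Module.Basis (Fin (d m)) ℂ (A ⟶ E⟦m⟧) :=
    fun m => (letI := hFD m; Module.finBasis ℂ (A ⟶ E⟦m⟧)) with hbas
  set Bf : ℤ → C := fun m => nCopies (E⟦m⟧) (d m) with hBf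
  set cf : ∀ m, A ⟶ Bf m := fun m => copiesLift (fun i => bas m i) with hcf
  set ms : List ℤ := ((hft A E).2).toFinset.toList with hms
  set A' : C := outObj Bf ms with hA'
  set c : A ⟶ A' := outLift Bf cf ms with hc
  -- block lemmas
  have hmis : ∀ m' : ℤ, ∀ m, m ≠ m' → ∀ g : Bf m ⟶ E⟦m'⟧, g = 0 := by
    intro m' m hm g
    refine copies_vanish (fun g₀ => ?_) g
    exact hom_zero_of_shift_src' (rfl : m' + -m = m' + -m)
      (hE.1 (m' + -m) (by omega)) g₀
  have hbinj : ∀ m' : ℤ, ∀ g : Bf m' ⟶ E⟦m'⟧, cf m' ≫ g = 0 → g = 0 := by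
    intro m' g hg
    obtain ⟨w, rfl⟩ := copies_hom_decomp g
    have hsc : ∀ i, ∃ cc : ℂ, w i = cc • 𝟙 (E⟦m'⟧) :=
      fun i => exceptional_endo_shift_scalar hft hE m' (w i)
    choose cs hcs using hsc
    rw [hcf] at hg
    simp only at hg
    rw [copiesLift_comp_desc] at hg
    have hg' : ∑ i, cs i • (bas m' i) = 0 := by
      rw [← hg]
      refine Finset.sum_congr rfl (fun i _ => ?_)
      rw [hcs i, Linear.comp_smul, Category.comp_id]
    have hzero : ∀ i, cs i = 0 := by
      have hli := (bas m').linearIndependent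
      rw [Fintype.linearIndependent_iff] at hli
      exact hli cs hg'
    refine copiesDesc_vanish w (fun i => ?_)
    rw [hcs i, hzero i, zero_smul]
  have hbsur : ∀ m' : ℤ, ∀ f : A ⟶ E⟦m'⟧, ∃ g : Bf m' ⟶ E⟦m'⟧, cf m' ≫ g = f := by
    intro m' f
    refine ⟨copiesDesc (fun i => ((bas m').repr f i) • 𝟙 (E⟦m'⟧)), ?_⟩
    rw [hcf]
    simp only
    rw [copiesLift_comp_desc]
    have : ∀ i ∈ Finset.univ, (bas m' i) ≫ (((bas m').repr f i) • 𝟙 (E⟦m'⟧))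
        = ((bas m').repr f i) • (bas m' i) := by
      intro i _
      rw [Linear.comp_smul, Category.comp_id]
    rw [Finset.sum_congr rfl this]
    exact (bas m').sum_repr f
  -- global injectivity / surjectivity of (c ≫ ·)
  have hinj : ∀ m' : ℤ, ∀ g : A' ⟶ E⟦m'⟧, c ≫ g = 0 → g = 0 := by
    intro m' g hg
    exact out_inj (hbinj m') (hmis m') (Finset.nodup_toList _) g hg
  have hsurj : ∀ m' : ℤ, ∀ f : A ⟶ E⟦m'⟧, ∃ g : A' ⟶ E⟦m'⟧, c ≫ g = f := by
    intro m' f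
    by_cases hmem : m' ∈ ms
    · exact out_surj (hbsur m') hmem f
    · have hnot : m' ∉ {k : ℤ | ∃ f : A ⟶ E⟦k⟧, f ≠ 0} := by
        intro hk
        exact hmem (by rw [hms]; rw [Finset.mem_toList, Set.Finite.mem_toFinset]; exact hk)
      have hf0 : f = 0 := by
        by_contra hne
        exact hnot ⟨f, hne⟩
      exact ⟨0, by rw [hf0, Limits.comp_zero]⟩
  -- complete to a triangle
  obtain ⟨B, ρ, δ, hdist⟩ := Pretriangulated.distinguished_cocone_triangle₁ c
  refine ⟨B, ρ, A', c, δ, ?_, hdist, ?_⟩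
  · refine outObj_genTriang (fun m => genTriang_nCopies ?_ _) ms
    exact genTriang.shift E m (genTriang.of E rfl)
  · intro m f
    have hinvrot := inv_rot_of_distTriang _ hdist
    have hδphantom : ∀ k : ℤ, ∀ w : B⟦(1:ℤ)⟧ ⟶ E⟦k⟧, δ ≫ w = 0 := by
      intro k w
      refine hinj k (δ ≫ w) ?_
      have h23 : c ≫ δ = 0 := comp_distTriang_mor_zero₂₃ _ hdist
      rw [← Category.assoc, h23, Limits.zero_comp]
    have hz : ∀ z : (B⟦(1:ℤ)⟧)⟦(-1:ℤ)⟧ ⟶ E⟦m⟧, (shiftFunctor C (-1:ℤ)).map δ ≫ z = 0 :=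
      phantom_comp_shift_neg δ hδphantom m
    have hmor₁ : (Triangle.mk ρ c δ).invRotate.mor₁ ≫ f = 0 := by
      dsimp [Triangle.invRotate]
      erw [Preadditive.neg_comp, Category.assoc, hz, neg_zero]; rfl
    obtain ⟨g, hg⟩ := Triangle.yoneda_exact₂ _ hinvrot f hmor₁
    obtain ⟨g₂, hg₂⟩ := hsurj m g
    have hmor₂ : (Triangle.mk ρ c δ).invRotate.mor₂ = ρ := rfl
    have h12 : ρ ≫ c = 0 := comp_distTriang_mor_zero₁₂ _ hdist
    rw [hg, hmor₂, ← hg₂]; erw [← Category.assoc, h12, Limits.zero_comp]; rfl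

end Infra3


section Infra4
set_option linter.unusedSectionVars false
set_option maxHeartbeats 1600000
variable {C}

lemma NoHoms.apply₀ {X Y : C} (h : NoHoms C X Y) (f : X ⟶ Y) : f = 0 := by
  set e := (shiftFunctorZero C ℤ).app Y with he
  have h0 : f ≫ e.inv = 0 := h 0 (f ≫ e.inv)
  have : f = (f ≫ e.inv) ≫ e.hom := by simp
  rw [this, h0, Limits.zero_comp]

lemma mem_leftOrth_coll {n : ℕ} {E : ℕ → C} {X : C} :
    X ∈ leftOrth C (collSet C n E) ↔ ∀ i < n, NoHoms C X (E i) := by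
  constructor
  · intro h i hi
    exact h (E i) ⟨i, hi, rfl⟩
  · rintro h Y ⟨i, hi, rfl⟩
    exact h i hi

lemma mem_rightOrth_coll {n : ℕ} {E : ℕ → C} {X : C} :
    X ∈ rightOrth C (collSet C n E) ↔ ∀ i < n, NoHoms C (E i) X := by
  constructor
  · intro h i hi
    exact h (E i) ⟨i, hi, rfl⟩
  · rintro h Y ⟨i, hi, rfl⟩
    exact h i hi

/-- The Serre image of an object sits in the right orthogonal of anything the
object is left-orthogonal to. -/
lemma serre_obj_noHoms (SD : SerreDataOn C (Set.univ : Set C)) {X F : C}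
    (hXF : NoHoms C X F) : NoHoms C F (SD.S.obj X) := by
  intro m f
  refine hom_zero_of_shift_neg m (fun w => ?_) f
  have hdual : ∀ φ : Module.Dual ℂ (F⟦(-m:ℤ)⟧ ⟶ SD.S.obj X), φ w = 0 := by
    intro φ
    obtain ⟨u, hu⟩ := (SD.bij X (Set.mem_univ X) (F⟦(-m:ℤ)⟧) (Set.mem_univ _)).2 φ
    rw [← hu, hXF (-m) u]
    simp
  exact (Module.forall_dual_apply_eq_zero_iff ℂ w).1 hdual

/-! ### The upward chain: properties of iterated left mutations of `X` -/

lemma upchain {n : ℕ} {E : ℕ → C} (hE : ExcCollection C n E) {X : C}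
    (hX : ∀ i < n, NoHoms C X (E i)) :
    ∀ (d j : ℕ), j + d ≤ n → ∀ Z : C, IterLeftMut C ((List.range' j d).map E) X Z →
      (∀ i, i < j → NoHoms C Z (E i)) ∧ (∀ i, j ≤ i → i < j + d → NoHoms C (E i) Z) ∧
      ∃ ψ : X ⟶ Z, ∀ A : C, (∀ i, i < n → NoHoms C (E i) A) →
        Function.Bijective (fun f : Z ⟶ A => ψ ≫ f) := by
  intro d
  induction d with
  | zero =>
    intro j hj Z hZ
    obtain ⟨e⟩ : Nonempty (X ≅ Z) := hZ
    refine ⟨fun i hi => NoHoms.iso_src e (hX i (by omega)), fun i hi hi' => by omega,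
      e.hom, fun A hA => ?_⟩
    constructor
    · intro f g hfg
      simpa using congrArg (fun t => e.inv ≫ t) hfg
    · intro u
      exact ⟨e.inv ≫ u, by simp⟩
  | succ d ih =>
    intro j hj Z hZ
    rw [List.range'_succ, List.map_cons] at hZ
    obtain ⟨Z', hZ', hmut⟩ := hZ
    obtain ⟨hZ'lo, hZ'ro, ψ', hψ'⟩ := ih (j+1) (by omega) Z' hZ'
    obtain ⟨hZ'l, hZr, A₀, f0, g0, h0, hgen, hdist⟩ := hmut
    have hjn : j < n := by omega
    have hA₀src : ∀ i, i < j → NoHoms C A₀ (E i) := fun i hi =>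
      genTriang_noHoms_src (fun s hs => by
        rw [Set.mem_singleton_iff] at hs
        rw [hs]
        exact hE.2 i j hi hjn) hgen
    have hA₀tgt : ∀ i, j < i → i < n → NoHoms C (E i) A₀ := fun i hi hi' =>
      genTriang_noHoms_tgt (fun s hs => by
        rw [Set.mem_singleton_iff] at hs
        rw [hs]
        exact hE.2 j i hi hi') hgen
    set T := Triangle.mk f0 g0 h0 with hT
    have hrot := rot_of_distTriang T hdist
    refine ⟨?_, ?_, ?_⟩
    · -- Z is left-orthogonal to E i for i < j
      intro i hi m u
      have h1 : T.rotate.mor₁ ≫ u = 0 := hZ'lo i (by omega) m (g0 ≫ u)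
      obtain ⟨w, hw⟩ := Triangle.yoneda_exact₂ T.rotate hrot u h1
      have hw0 : w = 0 := (hA₀src i hi).shift_left 1 m w
      rw [hw, hw0, Limits.comp_zero]; rfl
    · -- E i is left-orthogonal to Z for j ≤ i < j + d + 1
      intro i hi1 hi2
      rcases Nat.eq_or_lt_of_le hi1 with heq | hlt
      · exact heq ▸ hZr (E j) rfl
      · intro m u
        have hTm := Pretriangulated.Triangle.shift_distinguished T.rotate hrot m
        rw [Triangle.shiftFunctor_eq] at hTm
        have h2 : u ≫ ((Triangle.shiftFunctor C m).obj T.rotate).mor₂ = 0 :=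
          ((hA₀tgt i hlt (by omega)).shift_right 1) m _
        obtain ⟨w, hw⟩ := Triangle.coyoneda_exact₂ _ hTm
          (u : E i ⟶ ((Triangle.shiftFunctor C m).obj T.rotate).obj₂) h2
        have hw0 : w = 0 := hZ'ro i (by omega) (by omega) m w
        rw [hw, hw0, Limits.zero_comp]; rfl
    · -- the canonical morphism ψ
      refine ⟨ψ' ≫ g0, fun A hA => ?_⟩
      have hA₀A : NoHoms C A₀ A := genTriang_noHoms_src (fun s hs => by
        rw [Set.mem_singleton_iff] at hs
        rw [hs]
        exact hA j hjn) hgen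
      have hstep : Function.Bijective (fun f : Z ⟶ A => g0 ≫ f) := by
        constructor
        · intro f g hfg
          simp only at hfg
          have hf1 : T.rotate.mor₁ ≫ (f - g) = 0 := by
            have : g0 ≫ (f - g) = 0 := by
              rw [Preadditive.comp_sub, hfg, sub_self]
            exact this
          obtain ⟨w, hw⟩ := Triangle.yoneda_exact₂ T.rotate hrot (f - g) hf1
          have hw0 : w = 0 := (hA₀A.shift_left 1).apply₀ w
          have : f - g = 0 := by rw [hw, hw0, Limits.comp_zero]; rfl
          exact sub_eq_zero.1 this
        · intro u
          have h1 : T.mor₁ ≫ u = 0 := hA₀A.apply₀ _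
          obtain ⟨w, hw⟩ := Triangle.yoneda_exact₂ T hdist u h1
          exact ⟨w, hw.symm⟩
      have := (hψ' A hA)
      have hcomp : (fun f : Z ⟶ A => (ψ' ≫ g0) ≫ f)
          = (fun f : Z' ⟶ A => ψ' ≫ f) ∘ (fun f : Z ⟶ A => g0 ≫ f) := by
        funext f
        simp [Category.assoc]
      rw [hcomp]
      exact (hψ' A hA).comp hstep

/-! ### The downward chain: iterated right mutations (as left mutation data) -/

lemma downchain {n : ℕ} {E : ℕ → C} (hft : FiniteType C) (hE : ExcCollection C n E) :
    ∀ (d j : ℕ), j + d = n → ∀ A : C,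
      (∀ i, j ≤ i → i < n → NoHoms C (E i) A) → (∀ i, i < j → NoHoms C A (E i)) →
      ∃ (Z : C) (ρ : Z ⟶ A), IterLeftMut C ((List.range' j d).map E) Z A ∧
        (∀ i, i < n → NoHoms C Z (E i)) ∧
        (∀ T₀ : C, (∀ i, i < n → NoHoms C T₀ (E i)) →
          Function.Bijective (fun g : T₀ ⟶ Z => g ≫ ρ)) := by
  intro d
  induction d with
  | zero =>
    intro j hj A hA1 hA2
    refine ⟨A, 𝟙 A, ⟨Iso.refl A⟩, fun i hi => hA2 i (by omega), fun T₀ hT₀ => ?_⟩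
    constructor
    · intro f g hfg
      simpa using hfg
    · intro u
      exact ⟨u, by simp⟩
  | succ d ih =>
    intro j hj A hA1 hA2
    have hjn : j < n := by omega
    obtain ⟨B, ρ₀, A', c, δ, hgen, hdist, hBvan⟩ :=
      exists_right_approx hft (hE.1 j hjn) A
    have hinvrot := inv_rot_of_distTriang _ hdist
    have hT₀A' : ∀ T₀ : C, NoHoms C T₀ (E j) → NoHoms C T₀ A' :=
      fun T₀ h => genTriang_noHoms_tgt (fun s hs => by
        rw [Set.mem_singleton_iff] at hs
        rw [hs]
        exact h) hgen
    have hA'src : ∀ i, i < j → NoHoms C A' (E i) := fun i hi =>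
      genTriang_noHoms_src (fun s hs => by
        rw [Set.mem_singleton_iff] at hs
        rw [hs]
        exact hE.2 i j hi hjn) hgen
    -- invariants for B
    have hB1 : ∀ i, j + 1 ≤ i → i < n → NoHoms C (E i) B := by
      intro i hi1 hi2 m u
      have hTm := Pretriangulated.Triangle.shift_distinguished
        (Triangle.mk ρ₀ c δ).invRotate hinvrot m
      rw [Triangle.shiftFunctor_eq] at hTm
      have h2 : u ≫ ((Triangle.shiftFunctor C m).obj (Triangle.mk ρ₀ c δ).invRotate).mor₂ = 0 :=
        hA1 i (by omega) hi2 m _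
      obtain ⟨w, hw⟩ := Triangle.coyoneda_exact₂ _ hTm
        (u : E i ⟶ ((Triangle.shiftFunctor C m).obj (Triangle.mk ρ₀ c δ).invRotate).obj₂) h2
      have hEiA' : NoHoms C (E i) A' := hT₀A' (E i) (hE.2 j i (by omega) hi2)
      have hw0 : w = 0 := (hEiA'.shift_right (-1)) m w
      rw [hw, hw0, Limits.zero_comp]; rfl
    have hB2 : ∀ i, i < j + 1 → NoHoms C B (E i) := by
      intro i hi
      rcases Nat.eq_or_lt_of_le (Nat.lt_succ_iff.1 hi) with rfl | hlt
      · exact fun m f => hBvan m f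
      · intro m u
        have h1 : (Triangle.mk ρ₀ c δ).invRotate.mor₁ ≫ u = 0 :=
          ((hA'src i hlt).shift_left (-1)) m _
        obtain ⟨w, hw⟩ := Triangle.yoneda_exact₂ _ hinvrot u h1
        have hw0 : w = 0 := hA2 i hlt m w
        rw [hw, hw0, Limits.comp_zero]; rfl
    obtain ⟨Z, ρ', hIter, hZlo, hbij⟩ := ih (j+1) (by omega) B hB1 hB2
    refine ⟨Z, ρ' ≫ ρ₀, ?_, hZlo, ?_⟩
    · rw [List.range'_succ, List.map_cons]
      refine ⟨B, hIter, ?_, ?_, A'⟦(-1:ℤ)⟧, (Triangle.mk ρ₀ c δ).invRotate.mor₁,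
        (Triangle.mk ρ₀ c δ).invRotate.mor₂, (Triangle.mk ρ₀ c δ).invRotate.mor₃,
        genTriang.shift A' (-1) hgen, hinvrot⟩
      · intro Y hY
        rw [Set.mem_singleton_iff] at hY
        rw [hY]
        exact fun m f => hBvan m f
      · intro Y hY
        rw [Set.mem_singleton_iff] at hY
        rw [hY]
        exact hA1 j le_rfl hjn
    · intro T₀ hT₀
      have hT₀A'' : NoHoms C T₀ A' := hT₀A' T₀ (hT₀ j hjn)
      have hstep : Function.Bijective (fun g : T₀ ⟶ B => g ≫ ρ₀) := by
        constructor
        · intro f g hfg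
          simp only at hfg
          have h1 : (f - g) ≫ (Triangle.mk ρ₀ c δ).invRotate.mor₂ = 0 := by
            have : (f - g) ≫ ρ₀ = 0 := by
              rw [Preadditive.sub_comp, hfg, sub_self]
            exact this
          obtain ⟨w, hw⟩ := Triangle.coyoneda_exact₂ _ hinvrot (f - g) h1
          have hw0 : w = 0 := (hT₀A''.shift_right (-1)).apply₀ w
          have : f - g = 0 := by rw [hw, hw0, Limits.zero_comp]; rfl
          exact sub_eq_zero.1 this
        · intro u
          have h1 : u ≫ (Triangle.mk ρ₀ c δ).mor₂ = 0 := hT₀A''.apply₀ _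
          obtain ⟨w, hw⟩ := Triangle.coyoneda_exact₂ _ hdist u h1
          exact ⟨w, hw.symm⟩
      have hcomp : (fun g : T₀ ⟶ Z => g ≫ (ρ' ≫ ρ₀))
          = (fun g : T₀ ⟶ B => g ≫ ρ₀) ∘ (fun g : T₀ ⟶ Z => g ≫ ρ') := by
        funext g
        simp [Category.assoc]
      rw [hcomp]
      exact hstep.comp (hbij T₀ hT₀)

end Infra4


section Infra5
set_option linter.unusedSectionVars false
set_option maxHeartbeats 3200000
variable {C}

lemma iterLeftMut_iso_src : ∀ (l : List C) {Z Z' W : C}, (Z' ≅ Z) →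
    IterLeftMut C l Z W → IterLeftMut C l Z' W
  | [] => fun e h => by
      obtain ⟨e'⟩ := h
      exact ⟨e.trans e'⟩
  | (F::t) => fun e h => by
      obtain ⟨Z₀, h1, h2⟩ := h
      exact ⟨Z₀, iterLeftMut_iso_src t e h1, h2⟩

end Infra5

/-- For an exceptional collection `𝔼` in a saturated triangulated category
with Serre functor `S_D`, one has `S_{𝔼^⊥} ∘ L_𝔼 = S_D|_{^⊥𝔼} = L_𝔼 ∘ S_{^⊥𝔼}` on `^⊥𝔼`. -/
theorem serre_functor_commutes_with_mutation (hft : FiniteType C) (n : ℕ) (E : ℕ → C)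
    (hE : ExcCollection C n E)
    (SD : SerreDataOn C (Set.univ : Set C))
    (SL : SerreDataOn C (leftOrth C (collSet C n E)))
    (SR : SerreDataOn C (rightOrth C (collSet C n E)))
    (X Y : C) (hX : X ∈ leftOrth C (collSet C n E))
    (hXY : IterLeftMut C ((List.range n).map E) X Y) :
    Nonempty (SR.S.obj Y ≅ SD.S.obj X) ∧
      IterLeftMut C ((List.range n).map E) (SL.S.obj X) (SD.S.obj X) := by
  have hXlo : ∀ i < n, NoHoms C X (E i) := mem_leftOrth_coll.1 hX
  rw [List.range_eq_range'] at hXY ⊢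
  -- properties of Y
  obtain ⟨-, hYro', ψ, hψ⟩ := upchain hE hXlo n 0 (by omega) Y hXY
  have hYro : ∀ i < n, NoHoms C (E i) Y := fun i hi => hYro' i (Nat.zero_le i) (by omega)
  have hYmem : Y ∈ rightOrth C (collSet C n E) := mem_rightOrth_coll.2 hYro
  -- properties of N := SD.S.obj X
  have hNro : ∀ i < n, NoHoms C (E i) (SD.S.obj X) :=
    fun i hi => serre_obj_noHoms SD (hXlo i hi)
  have hNmem : SD.S.obj X ∈ rightOrth C (collSet C n E) := mem_rightOrth_coll.2 hNro
  -- properties of M := SR.S.obj Y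
  have hMmem : SR.S.obj Y ∈ rightOrth C (collSet C n E) := SR.maps_mem Y hYmem
  have hMro : ∀ i < n, NoHoms C (E i) (SR.S.obj Y) := mem_rightOrth_coll.1 hMmem
  -- flip bijections
  have flipSD' : ∀ T : C, Function.Bijective ((SD.pairing X T).flip) := by
    intro T
    haveI := homFinite hft X T
    haveI := homFinite hft T (SD.S.obj X)
    exact flip_bijective _ (SD.bij X (Set.mem_univ _) T (Set.mem_univ _))
  have flipSL' : ∀ T : C, (∀ i, i < n → NoHoms C T (E i)) →
      Function.Bijective ((SL.pairing X T).flip) := by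
    intro T hT
    haveI := homFinite hft X T
    haveI := homFinite hft T (SL.S.obj X)
    exact flip_bijective _ (SL.bij X hX T (mem_leftOrth_coll.2 hT))
  have flipSR' : ∀ A : C, A ∈ rightOrth C (collSet C n E) →
      Function.Bijective ((SR.pairing Y A).flip) := by
    intro A hA
    haveI := homFinite hft Y A
    haveI := homFinite hft A (SR.S.obj Y)
    exact flip_bijective _ (SR.bij Y hYmem A hA)
  constructor
  · -- Goal 1 : SR.S.obj Y ≅ SD.S.obj X
    set ψℓM : (Y ⟶ SR.S.obj Y) →ₗ[ℂ] (X ⟶ SR.S.obj Y) :=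
      Linear.leftComp (R := ℂ) _ ψ with hψℓM
    have hbijM : Function.Bijective ψℓM := hψ _ hMro
    set σ := LinearEquiv.ofBijective ψℓM hbijM with hσ
    set φa : (X ⟶ SR.S.obj Y) →ₗ[ℂ] ℂ :=
      ((SR.pairing Y (SR.S.obj Y)).flip (𝟙 (SR.S.obj Y))).comp σ.symm.toLinearMap with hφa
    obtain ⟨a, ha⟩ := (flipSD' (SR.S.obj Y)).2 φa
    have char_a : ∀ u : Y ⟶ SR.S.obj Y,
        SD.pairing X _ (ψ ≫ u) a = SR.pairing Y _ u (𝟙 (SR.S.obj Y)) := by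
      intro u
      calc SD.pairing X _ (ψ ≫ u) a = (SD.pairing X _).flip a (ψ ≫ u) := rfl
        _ = φa (ψ ≫ u) := by rw [ha]
        _ = (SR.pairing Y _).flip (𝟙 (SR.S.obj Y)) (σ.symm (ψ ≫ u)) := rfl
        _ = (SR.pairing Y _).flip (𝟙 (SR.S.obj Y)) u := by
            have h2 : (ψ ≫ u) = σ u := rfl
            rw [h2, LinearEquiv.symm_apply_apply]
        _ = SR.pairing Y _ u (𝟙 (SR.S.obj Y)) := rfl
    set φb : (Y ⟶ SD.S.obj X) →ₗ[ℂ] ℂ :=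
      ((SD.pairing X (SD.S.obj X)).flip (𝟙 (SD.S.obj X))).comp
        (Linear.leftComp (R := ℂ) (SD.S.obj X) ψ) with hφb
    obtain ⟨b, hb⟩ := (flipSR' (SD.S.obj X) hNmem).2 φb
    have char_b : ∀ u : Y ⟶ SD.S.obj X,
        SR.pairing Y _ u b = SD.pairing X _ (ψ ≫ u) (𝟙 (SD.S.obj X)) := by
      intro u
      calc SR.pairing Y _ u b = (SR.pairing Y _).flip b u := rfl
        _ = φb u := by rw [hb]
        _ = SD.pairing X _ (ψ ≫ u) (𝟙 (SD.S.obj X)) := rfl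
    have hba : b ≫ a = 𝟙 (SD.S.obj X) := by
      apply (flipSD' (SD.S.obj X)).1
      apply LinearMap.ext
      intro t
      obtain ⟨u, hu⟩ := (hψ (SD.S.obj X) hNro).2 t
      have hu' : ψ ≫ u = t := hu
      simp only [LinearMap.flip_apply]
      rw [← hu']
      calc SD.pairing X _ (ψ ≫ u) (b ≫ a)
          = SD.pairing X _ ((ψ ≫ u) ≫ b) a := (SD.nat_right (ψ ≫ u) b a).symm
        _ = SD.pairing X _ (ψ ≫ (u ≫ b)) a := by rw [Category.assoc]
        _ = SR.pairing Y _ (u ≫ b) (𝟙 (SR.S.obj Y)) := char_a (u ≫ b)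
        _ = SR.pairing Y _ u (b ≫ 𝟙 (SR.S.obj Y)) := SR.nat_right u b (𝟙 _)
        _ = SR.pairing Y _ u b := by rw [Category.comp_id]
        _ = SD.pairing X _ (ψ ≫ u) (𝟙 (SD.S.obj X)) := char_b u
    have hab : a ≫ b = 𝟙 (SR.S.obj Y) := by
      apply (flipSR' (SR.S.obj Y) hMmem).1
      apply LinearMap.ext
      intro u
      simp only [LinearMap.flip_apply]
      calc SR.pairing Y _ u (a ≫ b)
          = SR.pairing Y _ (u ≫ a) b := (SR.nat_right u a b).symm
        _ = SD.pairing X _ (ψ ≫ (u ≫ a)) (𝟙 (SD.S.obj X)) := char_b (u ≫ a)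
        _ = SD.pairing X _ ((ψ ≫ u) ≫ a) (𝟙 (SD.S.obj X)) := by rw [Category.assoc]
        _ = SD.pairing X _ (ψ ≫ u) (a ≫ 𝟙 (SD.S.obj X)) := SD.nat_right (ψ ≫ u) a (𝟙 _)
        _ = SD.pairing X _ (ψ ≫ u) a := by rw [Category.comp_id]
        _ = SR.pairing Y _ u (𝟙 (SR.S.obj Y)) := char_a u
    exact ⟨Iso.mk a b hab hba⟩
  · -- Goal 2 : the mutation of SL.S.obj X
    have hVmem : SL.S.obj X ∈ leftOrth C (collSet C n E) := SL.maps_mem X hX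
    have hVlo : ∀ i < n, NoHoms C (SL.S.obj X) (E i) := mem_leftOrth_coll.1 hVmem
    obtain ⟨Z, ρ, hIter, hZlo, hρbij⟩ := downchain hft hE n 0 (by omega) (SD.S.obj X)
      (fun i _ hi => hNro i hi) (fun i hi => absurd hi (Nat.not_lt_zero i))
    -- the comparison maps
    set θfun : ∀ (T : C), (∀ i, i < n → NoHoms C T (E i)) → (T ⟶ Z) → (T ⟶ SL.S.obj X) :=
      fun T hT v => (Equiv.ofBijective _ (flipSL' T hT)).symm ((SD.pairing X T).flip (v ≫ ρ))
      with hθfun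
    have hchar : ∀ (T : C) (hT : ∀ i, i < n → NoHoms C T (E i)) (v : T ⟶ Z) (x : X ⟶ T),
        SL.pairing X T x (θfun T hT v) = SD.pairing X T x (v ≫ ρ) := by
      intro T hT v x
      have h3 := Equiv.apply_symm_apply (Equiv.ofBijective _ (flipSL' T hT))
        ((SD.pairing X T).flip (v ≫ ρ))
      have h4 : (SL.pairing X T).flip (θfun T hT v) = (SD.pairing X T).flip (v ≫ ρ) := h3
      have h5 := congrArg (fun φ => φ x) h4
      simpa only [LinearMap.flip_apply] using h5
    have hθbij : ∀ (T : C) (hT : ∀ i, i < n → NoHoms C T (E i)),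
        Function.Bijective (θfun T hT) := by
      intro T hT
      have h1 : Function.Bijective (fun v : T ⟶ Z => (SD.pairing X T).flip (v ≫ ρ)) := by
        have := (flipSD' T).comp (hρbij T hT)
        exact this
      exact ((Equiv.ofBijective _ (flipSL' T hT)).symm.bijective).comp h1
    have hnat : ∀ (T T' : C) (hT : ∀ i, i < n → NoHoms C T (E i))
        (hT' : ∀ i, i < n → NoHoms C T' (E i)) (g : T' ⟶ T) (v : T ⟶ Z),
        θfun T' hT' (g ≫ v) = g ≫ θfun T hT v := by
      intro T T' hT hT' g v
      apply (flipSL' T' hT').1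
      apply LinearMap.ext
      intro x
      simp only [LinearMap.flip_apply]
      rw [hchar T' hT' (g ≫ v) x, Category.assoc, ← SD.nat_right x g (v ≫ ρ),
        ← hchar T hT v (x ≫ g)]
      exact SL.nat_right x g (θfun T hT v)
    set a2 : Z ⟶ SL.S.obj X := θfun Z hZlo (𝟙 Z) with ha2
    obtain ⟨b2, hb2⟩ := (hθbij (SL.S.obj X) hVlo).2 (𝟙 (SL.S.obj X))
    have hba2 : b2 ≫ a2 = 𝟙 (SL.S.obj X) := by
      have := hnat Z (SL.S.obj X) hZlo hVlo b2 (𝟙 Z)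
      rw [Category.comp_id] at this
      rw [← this, hb2]
    have hab2 : a2 ≫ b2 = 𝟙 Z := by
      apply (hθbij Z hZlo).1
      have := hnat (SL.S.obj X) Z hVlo hZlo a2 b2
      rw [this, hb2, Category.comp_id, ha2]
    exact iterLeftMut_iso_src _ (Iso.mk b2 a2 hba2 hab2) hIter
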